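/- For q ∈ [0,1) the polynomials ω_k determined by ω_0 = 1, ω_{-1} = 0 and the recurrence ω_{k+1}(t) - q(1-q)k(k+d-1)ω_{k-1}(t) - [t + (1-q)d - (2q-1)k]ω_k(t) = 0 are given explicitly by ω_k(t) = (d)_k (1-q)^k · ₂F₁(-t, -k, d; 1/(1-q)), where (d)_k = d(d+1)⋯(d+k-1) is the Pochhammer symbol and ₂F₁(-t,-k,d;x) = Σ_{s=0}^{k} ((-t)_s (-k)_s / ((d)_s s!)) x^s is the (terminating) Gauss hypergeometric polynomial in t. -/

import Mathlib

open Polynomial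

set_option maxHeartbeats 1000000

section
variable (c e : ℂ)

noncomputable def pE (n : ℕ) (x : ℂ) : ℂ := (ascPochhammer ℂ n).eval x
noncomputable def Bc (c e : ℂ) (k s : ℕ) : ℂ :=
  (-1)^s * (k.descFactorial s : ℂ) / (s.factorial : ℂ) * pE (k-s) (e + s) * c^(k-s)
lemma pE_zero (x : ℂ) : pE 0 x = 1 := by simp [pE]
lemma pE_succ (n : ℕ) (x : ℂ) : pE (n+1) x = pE n x * (x + n) := ascPochhammer_succ_eval n x
lemma pE_succ_left (n : ℕ) (x : ℂ) : pE (n+1) x = x * pE n (x+1) := by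
  simp [pE, ascPochhammer_succ_left, eval_comp]
lemma pE_one (x : ℂ) : pE 1 x = x := by rw [show (1:ℕ) = 0+1 from rfl, pE_succ, pE_zero]; simp
lemma Bc_of_lt {k s : ℕ} (h : k < s) : Bc c e k s = 0 := by
  simp [Bc, Nat.descFactorial_eq_zero_iff_lt.2 h]
lemma Bc_self (n : ℕ) : Bc c e n n = (-1)^n := by
  have := Nat.cast_ne_zero (R := ℂ).2 n.factorial_ne_zero
  simp [Bc, Nat.descFactorial_self, pE_zero, Nat.sub_self]
  field_simp

lemma Bc_rec_succ (k σ : ℕ) :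
    Bc c e (k+1) (σ+1) = (((σ:ℂ)+1) + c*e - (1-2*c)*(k:ℂ)) * Bc c e k (σ+1)
      - Bc c e k σ + (1-c)*c*(k:ℂ)*((k:ℂ)+e-1) * Bc c e (k-1) (σ+1) := by
  cases k with
  | zero =>
    cases σ with
    | zero =>
      have z1 : Bc c e 0 (0+1) = 0 := Bc_of_lt c e (by omega)
      rw [z1, Bc_self, Bc_self]
      norm_num
    | succ s =>
      have z1 : Bc c e (0+1) (s+1+1) = 0 := Bc_of_lt c e (by omega)
      have z2 : Bc c e 0 (s+1+1) = 0 := Bc_of_lt c e (by omega)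
      have z3 : Bc c e 0 (s+1) = 0 := Bc_of_lt c e (by omega)
      have z4 : Bc c e (0-1) (s+1+1) = 0 := Bc_of_lt c e (by omega)
      rw [z1, z2, z3]
      ring
  | succ j =>
    rcases Nat.lt_or_ge j (σ+1) with h | h
    · -- j ≤ σ
      rcases Nat.lt_or_ge σ (j+2) with h2 | h2
      · rcases (by omega : σ = j ∨ σ = j+1) with rfl | rfl
        · -- σ = j : edge case (j gets replaced by σ)
          have hd1 : (σ+1).descFactorial σ = (σ+1).factorial := by
            have := Nat.factorial_mul_descFactorial (Nat.le_succ σ)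
            rw [show σ+1-σ = 1 by omega, Nat.factorial_one, one_mul] at this
            exact this
          have hd2 : (σ+1+1).descFactorial (σ+1) = (σ+1+1) * (σ+1).factorial := by
            rw [Nat.succ_descFactorial_succ, hd1]
          have z4 : Bc c e (σ+1-1) (σ+1) = 0 := Bc_of_lt c e (by omega)
          rw [z4, Bc_self]
          simp only [Bc]
          rw [show σ+1+1-(σ+1) = 1 by omega, show σ+1-σ = 1 by omega, pE_one, pE_one,
            hd2, hd1, Nat.factorial_succ (σ)]
          have hf2 : ((σ.factorial : ℕ) : ℂ) ≠ 0 := Nat.cast_ne_zero.2 (Nat.factorial_ne_zero _)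
          have hn1 : ((σ:ℂ)+1) ≠ 0 := by
            have := (Nat.cast_ne_zero (R := ℂ)).2 (show σ+1 ≠ 0 by omega)
            push_cast at this; exact this
          field_simp
          push_cast
          ring
        · -- σ = j+1 : top edge (σ gets replaced by j+1)
          have z1 : Bc c e (j+1) (j+1+1) = 0 := Bc_of_lt c e (by omega)
          have z4 : Bc c e (j+1-1) (j+1+1) = 0 := Bc_of_lt c e (by omega)
          rw [z1, z4, Bc_self, Bc_self]
          ring
      · -- σ ≥ j+2 : all zero
        have z1 : Bc c e (j+1+1) (σ+1) = 0 := Bc_of_lt c e (by omega)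
        have z2 : Bc c e (j+1) (σ+1) = 0 := Bc_of_lt c e (by omega)
        have z3 : Bc c e (j+1) σ = 0 := Bc_of_lt c e (by omega)
        have z4 : Bc c e (j+1-1) (σ+1) = 0 := Bc_of_lt c e (by omega)
        rw [z1, z2, z3, z4]
        ring
    · -- generic: σ+1 ≤ j
      obtain ⟨m, rfl⟩ : ∃ m, j = σ+1+m := ⟨j - (σ+1), by omega⟩
      simp only [Bc, Nat.add_sub_cancel]
      rw [show σ+1+m+1+1 - (σ+1) = m+2 by omega, show σ+1+m+1 - (σ+1) = m+1 by omega,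
        show σ+1+m+1 - σ = m+2 by omega, show σ+1+m - (σ+1) = m by omega]
      -- descFactorial → factorial quotients, all over common denominator (m+2)!
      have hM0 : ((m.factorial : ℕ) : ℂ) ≠ 0 := Nat.cast_ne_zero.2 (Nat.factorial_ne_zero _)
      have hM1 : (((m+1).factorial : ℕ) : ℂ) ≠ 0 := Nat.cast_ne_zero.2 (Nat.factorial_ne_zero _)
      have hM2 : (((m+2).factorial : ℕ) : ℂ) ≠ 0 := Nat.cast_ne_zero.2 (Nat.factorial_ne_zero _)
      have hS0 : ((σ.factorial : ℕ) : ℂ) ≠ 0 := Nat.cast_ne_zero.2 (Nat.factorial_ne_zero _)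
      have hS1 : (((σ+1).factorial : ℕ) : ℂ) ≠ 0 := Nat.cast_ne_zero.2 (Nat.factorial_ne_zero _)
      have gM2 : (((m+2).factorial : ℕ) : ℂ) = (↑m+2) * (((m+1).factorial : ℕ) : ℂ) := by
        rw [Nat.factorial_succ]; push_cast; ring
      have gM1 : (((m+1).factorial : ℕ) : ℂ) = (↑m+1) * ((m.factorial : ℕ) : ℂ) := by
        rw [Nat.factorial_succ]; push_cast; ring
      have gS1 : (((σ+1).factorial : ℕ) : ℂ) = (↑σ+1) * ((σ.factorial : ℕ) : ℂ) := by
        rw [Nat.factorial_succ]; push_cast; ring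
      have b1 : (((σ+1+m+1+1).descFactorial (σ+1) : ℕ) : ℂ) * ((m+2).factorial : ℂ)
          = ((σ+1+m+1+1).factorial : ℂ) := by
        have := Nat.factorial_mul_descFactorial (show σ+1 ≤ σ+1+m+1+1 by omega)
        rw [show σ+1+m+1+1 - (σ+1) = m+2 by omega] at this
        exact_mod_cast by rw [mul_comm] at this; exact this
      have b2 : (((σ+1+m+1).descFactorial (σ+1) : ℕ) : ℂ) * ((m+1).factorial : ℂ)
          = ((σ+1+m+1).factorial : ℂ) := by
        have := Nat.factorial_mul_descFactorial (show σ+1 ≤ σ+1+m+1 by omega)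
        rw [show σ+1+m+1 - (σ+1) = m+1 by omega] at this
        exact_mod_cast by rw [mul_comm] at this; exact this
      have b3 : (((σ+1+m+1).descFactorial σ : ℕ) : ℂ) * ((m+2).factorial : ℂ)
          = ((σ+1+m+1).factorial : ℂ) := by
        have := Nat.factorial_mul_descFactorial (show σ ≤ σ+1+m+1 by omega)
        rw [show σ+1+m+1 - σ = m+2 by omega] at this
        exact_mod_cast by rw [mul_comm] at this; exact this
      have b4 : (((σ+1+m).descFactorial (σ+1) : ℕ) : ℂ) * ((m).factorial : ℂ)
          = ((σ+1+m).factorial : ℂ) := by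
        have := Nat.factorial_mul_descFactorial (show σ+1 ≤ σ+1+m by omega)
        rw [show σ+1+m - (σ+1) = m by omega] at this
        exact_mod_cast by rw [mul_comm] at this; exact this
      have f1 : (((σ+1+m+1+1).descFactorial (σ+1) : ℕ) : ℂ)
          = ((σ+1+m+1+1).factorial : ℂ) / ((m+2).factorial : ℂ) := by
        rw [eq_div_iff hM2]; exact b1
      have f2 : (((σ+1+m+1).descFactorial (σ+1) : ℕ) : ℂ)
          = (↑m+2) * ((σ+1+m+1).factorial : ℂ) / ((m+2).factorial : ℂ) := by
        rw [eq_div_iff hM2, gM2]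
        linear_combination (↑m+2 : ℂ) * b2
      have f4 : (((σ+1+m).descFactorial (σ+1) : ℕ) : ℂ)
          = ((↑m+1) * (↑m+2)) * ((σ+1+m).factorial : ℂ) / ((m+2).factorial : ℂ) := by
        rw [eq_div_iff hM2, gM2, gM1]
        linear_combination ((↑m+1 : ℂ) * (↑m+2)) * b4
      have f3 : (((σ+1+m+1).descFactorial σ : ℕ) : ℂ)
          = ((σ+1+m+1).factorial : ℂ) / ((m+2).factorial : ℂ) := by
        rw [eq_div_iff hM2]; exact b3
      have hn1 : ((σ:ℂ)+1) ≠ 0 := by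
        have := (Nat.cast_ne_zero (R := ℂ)).2 (show σ+1 ≠ 0 by omega)
        push_cast at this; exact this
      have hcoef3 : ((-1:ℂ))^σ * (((σ+1+m+1).descFactorial σ : ℕ) : ℂ) / ((σ.factorial : ℕ) : ℂ)
          = (-1:ℂ)^σ * ((↑σ+1) * (((σ+1+m+1).factorial : ℕ) : ℂ) / (((m+2).factorial : ℕ) : ℂ))
            / (((σ+1).factorial : ℕ) : ℂ) := by
        rw [f3, gS1]
        field_simp
      -- factorial expansions for numerators
      have g1 : ((σ+1+m+1+1).factorial : ℂ)
          = (↑σ+↑m+3) * ((↑σ+↑m+2) * ((σ+1+m).factorial : ℂ)) := by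
        rw [Nat.factorial_succ, Nat.factorial_succ]; push_cast; ring
      have g2 : ((σ+1+m+1).factorial : ℂ) = (↑σ+↑m+2) * ((σ+1+m).factorial : ℂ) := by
        rw [Nat.factorial_succ]; push_cast; ring
      -- pE reductions
      have p3 : pE (m+2) (e + (σ:ℂ)) = (e + σ) * (pE m (e + (σ:ℂ) + 1) * (e + σ + 1 + m)) := by
        rw [pE_succ_left, pE_succ]
      have hcast : ((σ+1 : ℕ) : ℂ) = (σ:ℂ) + 1 := by push_cast; ring
      have p1 : pE (m+2) (e + ((σ+1:ℕ) : ℂ))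
          = pE m (e + (σ:ℂ) + 1) * (e + σ + 1 + m) * (e + σ + 1 + m + 1) := by
        rw [hcast, ← add_assoc, pE_succ, pE_succ]
        push_cast; ring
      have p2 : pE (m+1) (e + ((σ+1:ℕ) : ℂ)) = pE m (e + (σ:ℂ) + 1) * (e + σ + 1 + m) := by
        rw [hcast, ← add_assoc, pE_succ]
      rw [hcoef3, f1, f2, f4, p1, p2, p3, g1, g2]
      push_cast
      ring

end

lemma pE_mul (n m : ℕ) (x : ℂ) : pE n x * pE m (x + n) = pE (n+m) x := by
  have := congrArg (eval x) (ascPochhammer_mul (S := ℂ) n m)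
  simpa [pE, eval_comp] using this

lemma pE_neg_nat (s k : ℕ) : pE s (-(k:ℂ)) = (-1)^s * (k.descFactorial s : ℂ) := by
  induction s with
  | zero => simp [pE]
  | succ s ih =>
    rw [pE_succ, ih, Nat.descFactorial_succ]
    rcases le_or_gt s k with h | h
    · push_cast [Nat.cast_sub h]
      ring
    · rw [Nat.descFactorial_eq_zero_iff_lt.2 h, Nat.sub_eq_zero_of_le h.le]
      push_cast
      ring

lemma pE_nat_ne_zero (s d : ℕ) (hd : 0 < d) : pE s (d : ℂ) ≠ 0 := by
  rw [pE, ← ascPochhammer_eval_cast, Nat.cast_ne_zero]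
  exact (ascPochhammer_pos s d hd).ne'

lemma Bc_eq_coeff (d : ℕ) (hd : 0 < d) (c : ℂ) (hc : c ≠ 0) (k s : ℕ) (hs : s ≤ k) :
    pE k (d:ℂ) * c^k * (pE s (-(k:ℂ)) / (pE s (d:ℂ) * (s.factorial : ℂ)) * (1/c)^s)
      = Bc c (d:ℂ) k s := by
  obtain ⟨m, rfl⟩ := Nat.exists_eq_add_of_le hs
  rw [pE_neg_nat, Bc, ← pE_mul, Nat.add_sub_cancel_left, pow_add]
  have h1 : pE s (d:ℂ) ≠ 0 := pE_nat_ne_zero s d hd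
  have h2 : ((s.factorial : ℕ) : ℂ) ≠ 0 := Nat.cast_ne_zero.2 s.factorial_ne_zero
  field_simp
  rw [one_div, inv_pow, mul_inv_cancel_right₀ (pow_ne_zero s hc)]

lemma Bc_zero_zero (c e : ℂ) (k : ℕ) : Bc c e k 0 = pE k e * c^k := by
  simp [Bc]

lemma Bc_rec_zero (c e : ℂ) (k : ℕ) :
    Bc c e (k+1) 0 = (c*e - (1-2*c)*(k:ℂ)) * Bc c e k 0
      + (1-c)*c*(k:ℂ)*((k:ℂ)+e-1) * Bc c e (k-1) 0 := by
  cases k with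
  | zero => simp [Bc_zero_zero, pE_succ, pE_zero]; ring
  | succ j =>
    simp only [Bc_zero_zero, Nat.add_sub_cancel]
    rw [show j+1+1 = j+2 from rfl, pE_succ (j+1), pE_succ j]
    push_cast
    ring

section
variable (c e : ℂ)

noncomputable def Pc (s : ℕ) : Polynomial ℂ := (ascPochhammer ℂ s).comp (-X)

lemma Pc_succ (s : ℕ) : Pc (s+1) = Pc s * (C ((s:ℕ):ℂ) - X) := by
  unfold Pc
  rw [ascPochhammer_succ_right, mul_comp, add_comp, X_comp, natCast_comp, ← C_eq_natCast]
  ring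

noncomputable def Wc (c e : ℂ) (k : ℕ) : Polynomial ℂ :=
  ∑ s ∈ Finset.range (k+1), C (Bc c e k s) * Pc s

lemma Wc_def (k : ℕ) : Wc c e k = ∑ s ∈ Finset.range (k+1), C (Bc c e k s) * Pc s := rfl

lemma Wc_ext (k n : ℕ) (h : k+1 ≤ n) :
    Wc c e k = ∑ s ∈ Finset.range n, C (Bc c e k s) * Pc s := by
  rw [Wc_def]
  apply Finset.sum_subset (Finset.range_subset_range.2 h)
  intro x _ hx
  simp only [Finset.mem_range, not_lt] at hx
  rw [Bc_of_lt c e (by omega)]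
  simp

noncomputable def gsh (c e : ℂ) (k : ℕ) : ℕ → ℂ
  | 0 => 0
  | (σ+1) => Bc c e k σ

lemma Wc_rec (k : ℕ) :
    Wc c e (k+1) = (X + C (c*e - (1-2*c)*(k:ℂ))) * Wc c e k
      + C ((1-c)*c*(k:ℂ)*((k:ℂ)+e-1)) * Wc c e (k-1) := by
  set α := c*e - (1-2*c)*(k:ℂ) with hα
  set β := (1-c)*c*(k:ℂ)*((k:ℂ)+e-1) with hβ
  have hWk : Wc c e k = ∑ s ∈ Finset.range (k+1+1), C (Bc c e k s) * Pc s :=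
    Wc_ext c e k (k+1+1) (by omega)
  have hWk1 : Wc c e (k-1) = ∑ s ∈ Finset.range (k+1+1), C (Bc c e (k-1) s) * Pc s :=
    Wc_ext c e (k-1) (k+1+1) (by omega)
  have step : ∀ s : ℕ, (X + C α) * (C (Bc c e k s) * Pc s) + C β * (C (Bc c e (k-1) s) * Pc s)
      = C (((s:ℂ) + α) * Bc c e k s + β * Bc c e (k-1) s) * Pc s - C (Bc c e k s) * Pc (s+1) := by
    intro s
    rw [Pc_succ]
    simp only [C_add, C_mul]
    ring
  have shift : ∑ s ∈ Finset.range (k+1+1), C (Bc c e k s) * Pc (s+1)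
      = ∑ s ∈ Finset.range (k+1+1), C (gsh c e k s) * Pc s := by
    rw [Finset.sum_range_succ (fun s => C (Bc c e k s) * Pc (s+1)) (k+1),
      Bc_of_lt c e (by omega : k < k+1), Finset.sum_range_succ' (fun s => C (gsh c e k s) * Pc s) (k+1)]
    simp [gsh]
  calc Wc c e (k+1)
      = ∑ s ∈ Finset.range (k+1+1), C (Bc c e (k+1) s) * Pc s := Wc_def c e (k+1)
    _ = ∑ s ∈ Finset.range (k+1+1),
          (C (((s:ℂ) + α) * Bc c e k s + β * Bc c e (k-1) s) * Pc s - C (gsh c e k s) * Pc s) := by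
        refine Finset.sum_congr rfl fun s _ => ?_
        rw [← sub_mul, ← map_sub]
        congr 1
        cases s with
        | zero =>
          simp only [gsh, Nat.cast_zero]
          rw [Bc_rec_zero c e k]
          rw [C_inj, hα, hβ]
          push_cast
          ring
        | succ σ =>
          simp only [gsh]
          rw [Bc_rec_succ c e k σ]
          rw [C_inj, hα, hβ]
          push_cast
          ring
    _ = ∑ s ∈ Finset.range (k+1+1),
          (C (((s:ℂ) + α) * Bc c e k s + β * Bc c e (k-1) s) * Pc s)
        - ∑ s ∈ Finset.range (k+1+1), C (gsh c e k s) * Pc s := by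
        rw [Finset.sum_sub_distrib]
    _ = ∑ s ∈ Finset.range (k+1+1),
          (C (((s:ℂ) + α) * Bc c e k s + β * Bc c e (k-1) s) * Pc s)
        - ∑ s ∈ Finset.range (k+1+1), C (Bc c e k s) * Pc (s+1) := by rw [shift]
    _ = ∑ s ∈ Finset.range (k+1+1),
          ((X + C α) * (C (Bc c e k s) * Pc s) + C β * (C (Bc c e (k-1) s) * Pc s)) := by
        rw [← Finset.sum_sub_distrib]
        exact Finset.sum_congr rfl fun s _ => (step s).symm
    _ = (X + C α) * Wc c e k + C β * Wc c e (k-1) := by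
        rw [hWk, hWk1, Finset.mul_sum, Finset.mul_sum, Finset.sum_add_distrib]

end

/-- For `q ∈ [0,1)`, the polynomials `ω_k` determined by `ω₀ = 1`,
`ω₋₁ = 0` and the recurrence
`ω_{k+1}(t) - q(1-q)k(k+d-1)ω_{k-1}(t) - [t + (1-q)d - (2q-1)k]ω_k(t) = 0`
are given explicitly by `ω_k(t) = (d)_k (1-q)^k · ₂F₁(-t, -k, d; 1/(1-q))`, where
`(d)_k` is the Pochhammer (ascending factorial) symbol and
`₂F₁(-t,-k,d;x) = Σ_{s=0}^{k} ((-t)_s (-k)_s / ((d)_s s!)) x^s` is the terminating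
Gauss hypergeometric polynomial in `t` (here `(-t)_s` is the polynomial
`(ascPochhammer ℂ s).comp (-X)`). -/
theorem stmt15 (d : ℕ) (hd : 0 < d) (q : ℝ) (hq : q ∈ Set.Ico (0 : ℝ) 1)
    (ω : ℕ → Polynomial ℂ) (h0 : ω 0 = 1)
    (hrec : ∀ k : ℕ, ω (k + 1) =
      (X + C (((1 - q : ℝ) : ℂ) * (d : ℂ) - ((2 * q - 1 : ℝ) : ℂ) * (k : ℂ))) * ω k +
      C ((q : ℂ) * ((1 - q : ℝ) : ℂ) * (k : ℂ) * ((k : ℂ) + (d : ℂ) - 1)) * ω (k - 1)) :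
    ∀ k : ℕ,
      ω k = C ((ascPochhammer ℂ k).eval (d : ℂ) * ((1 - q : ℝ) : ℂ) ^ k) *
        ∑ s ∈ Finset.range (k + 1),
          C ((ascPochhammer ℂ s).eval (-(k : ℂ)) /
              ((ascPochhammer ℂ s).eval (d : ℂ) * (s.factorial : ℂ)) *
            (1 / ((1 - q : ℝ) : ℂ)) ^ s) *
          (ascPochhammer ℂ s).comp (-X) := by
  obtain ⟨hq0, hq1⟩ := hq
  set c : ℂ := ((1 - q : ℝ) : ℂ) with hcdef
  set e : ℂ := (d : ℂ) with hedef
  have hc : c ≠ 0 := by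
    rw [hcdef, ne_eq, Complex.ofReal_eq_zero]
    intro h; linarith [sub_eq_zero.mp h]
  have hrec' : ∀ k : ℕ, ω (k+1) = (X + C (c*e - (1-2*c)*(k:ℂ))) * ω k
      + C ((1-c)*c*(k:ℂ)*((k:ℂ)+e-1)) * ω (k-1) := by
    intro k
    rw [hrec k]
    have e1 : ((1 - q : ℝ) : ℂ) * (d : ℂ) - ((2 * q - 1 : ℝ) : ℂ) * (k : ℂ)
        = c*e - (1-2*c)*(k:ℂ) := by
      rw [hcdef, hedef]; push_cast; ring
    have e2 : ((q : ℝ) : ℂ) * ((1 - q : ℝ) : ℂ) * (k : ℂ) * ((k : ℂ) + (d : ℂ) - 1)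
        = (1-c)*c*(k:ℂ)*((k:ℂ)+e-1) := by
      rw [hcdef, hedef]; push_cast; ring
    rw [e1, e2]
  have base0 : ω 0 = Wc c e 0 := by
    rw [h0, Wc_def]
    simp [Bc, Pc, pE]
  have key : ∀ k : ℕ, ω k = Wc c e k ∧ ω (k+1) = Wc c e (k+1) := by
    intro k
    induction k with
    | zero =>
      refine ⟨base0, ?_⟩
      rw [hrec' 0, Wc_rec c e 0]
      simp only [Nat.zero_sub, Nat.cast_zero]
      rw [base0]
    | succ n ih =>
      refine ⟨ih.2, ?_⟩
      rw [hrec' (n+1), Wc_rec c e (n+1), Nat.add_sub_cancel, ih.1, ih.2]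
  intro k
  rw [(key k).1, Wc_def, Finset.mul_sum]
  refine Finset.sum_congr rfl fun s hs => ?_
  rw [← mul_assoc, ← C_mul]
  exact congrArg (fun z => C z * Pc s)
    (Bc_eq_coeff d hd c hc k s (Nat.lt_succ_iff.mp (Finset.mem_range.mp hs))).symm
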